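/- Let G be an abelian group and P ⊆ G a finitely generated submonoid that generates G as a group. Let U = P ∩ (−P) be the subgroup of units of P. If U is torsion-free and the quotient group G ⧸ U is torsion-free, then the monoid algebra ℂ[P] = AddMonoidAlgebra ℂ P is an integral domain. -/

import Mathlib

/-- Old Mathlib definition (removed since): an additive monoid is torsion-free if no nonzero
element has finite additive order. -/
def AddMonoid.IsTorsionFree (G : Type*) [AddMonoid G] : Prop :=
  ∀ g : G, g ≠ 0 → ¬IsOfFinAddOrder g

theorem AddMonoid.isTorsionFree_iff_noZeroSMulDivisors_int {G : Type*} [AddCommGroup G] :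
    AddMonoid.IsTorsionFree G ↔ NoZeroSMulDivisors ℤ G := by
  constructor
  · intro h
    constructor
    intro n g hng
    by_contra hc
    push_neg at hc
    exact h g hc.2 (isOfFinAddOrder_iff_zsmul_eq_zero.mpr ⟨n, hc.1, hng⟩)
  · intro h g hg hfin
    obtain ⟨n, hn, hng⟩ := isOfFinAddOrder_iff_zsmul_eq_zero.mp hfin
    rcases smul_eq_zero.mp hng with h' | h'
    exacts [hn h', hg h']

theorem AddMonoid.IsTorsionFree.noZeroSMulDivisors_int {G : Type*} [AddCommGroup G]
    (h : AddMonoid.IsTorsionFree G) : NoZeroSMulDivisors ℤ G :=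
  AddMonoid.isTorsionFree_iff_noZeroSMulDivisors_int.mp h

/-- Let `G` be an abelian group and `P ⊆ G` a finitely generated submonoid generating `G`
as a group (so `G = P^gp` and `P` is fine).  Let `U = P ∩ (−P)` be the group of units of
`P`.  If `U` and `G ⧸ U` are torsion-free, then the monoid algebra `ℂ[P]` is an integral
domain. -/
theorem monoid_algebra_is_domain
    (G : Type*) [AddCommGroup G] (P : AddSubmonoid G) (hPfg : P.FG)
    (hgen : AddSubgroup.closure (P : Set G) = ⊤)
    (U : AddSubgroup G) (hU : ∀ g : G, g ∈ U ↔ g ∈ P ∧ -g ∈ P)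
    (hUtf : AddMonoid.IsTorsionFree U)
    (hGUtf : AddMonoid.IsTorsionFree (G ⧸ U)) :
    IsDomain (AddMonoidAlgebra ℂ ↥P) := by
  -- G is torsion-free
  have hGtf : AddMonoid.IsTorsionFree G := by
    have hQ := hGUtf.noZeroSMulDivisors_int
    have hUZ := hUtf.noZeroSMulDivisors_int
    rw [AddMonoid.isTorsionFree_iff_noZeroSMulDivisors_int]
    constructor
    intro n g hng
    by_contra h
    push_neg at h
    obtain ⟨hn, hg⟩ := h
    -- image in G ⧸ U
    have h1 : n • (QuotientAddGroup.mk g : G ⧸ U) = 0 := by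
      rw [← QuotientAddGroup.mk_zsmul, hng]; rfl
    have h2 : (QuotientAddGroup.mk g : G ⧸ U) = 0 := by
      rcases (smul_eq_zero.mp h1) with h | h
      · exact absurd h hn
      · exact h
    have hgU : g ∈ U := (QuotientAddGroup.eq_zero_iff g).mp h2
    have h3 : n • (⟨g, hgU⟩ : U) = 0 := by
      ext; simpa using hng
    rcases smul_eq_zero.mp h3 with h | h
    · exact hn h
    · exact hg (by simpa using congrArg Subtype.val h)
  haveI : NoZeroSMulDivisors ℤ G := hGtf.noZeroSMulDivisors_int
  -- G is a finitely generated ℤ-module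
  haveI : Module.Finite ℤ G := by
    rw [Module.Finite.iff_addGroup_fg, AddGroup.fg_iff]
    obtain ⟨S, hS⟩ := hPfg
    refine ⟨S, ?_, S.finite_toSet⟩
    rw [eq_top_iff, ← hgen]
    refine AddSubgroup.closure_le _ |>.mpr ?_
    intro x hx
    have : x ∈ AddSubmonoid.closure (S : Set G) := hS ▸ hx
    have hle : AddSubmonoid.closure (S : Set G) ≤
        (AddSubgroup.closure (S : Set G)).toAddSubmonoid :=
      AddSubmonoid.closure_le.mpr fun y hy => AddSubgroup.subset_closure hy
    exact hle this
  haveI : Module.Free ℤ G := Module.free_of_finite_type_torsion_free'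
  -- transfer UniqueSums from a free module to G, then to P
  let b := Module.Free.chooseBasis ℤ G
  haveI : UniqueSums G :=
    UniqueSums.of_injective_addHom ⟨b.repr, fun x y => map_add _ x y⟩
      b.repr.injective inferInstance
  haveI : UniqueSums P :=
    UniqueSums.of_injective_addHom (AddSubmonoid.subtype P).toAddHom
      Subtype.coe_injective inferInstance
  exact NoZeroDivisors.to_isDomain _
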